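/- Let λ = (√2/2)(1 + i) and c = i/(√2 (1 + i)). Then for every ψ ∈ 𝓢(ℝ,ℂ) and every x₀ ∈ ℝ: ∫_ℝ conj(c) e^{-conj(λ) |x - x₀|} (ψ(x) - i ψ''(x)) dx = ψ(x₀). (This is the biorthogonality relation ⟨η_{x₀}, η^{y₀}⟩ = δ(x₀ - y₀) between the eigenvector families η_{x₀}(x) = c e^{-λ|x - x₀|} of q̂ and η^{y₀} = ξ_{y₀} - i ξ''_{y₀} of q̂†, smeared in y₀ against the test function ψ.) -/

import Mathlib

open MeasureTheory Set Filter
open scoped Topology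

/-- `exp (b * x)` is integrable on `(-∞, c]` for `b > 0`. -/
lemma exp_integrableOn_Iic_aux (c : ℝ) {b : ℝ} (hb : 0 < b) :
    IntegrableOn (fun x : ℝ => Real.exp (b * x)) (Iic c) := by
  have A : MeasurableEmbedding fun x : ℝ => -x :=
    (Homeomorph.neg ℝ).isClosedEmbedding.measurableEmbedding
  have key := A.integrableOn_map_iff (f := fun x : ℝ => Real.exp (b * x)) (s := Iic c)
    (μ := volume)
  rw [Measure.map_neg_eq_self] at key
  rw [key]
  have h0 : IntegrableOn (fun x : ℝ => Real.exp (-b * x)) (Ici (-c)) := by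
    rw [integrableOn_Ici_iff_integrableOn_Ioi]
    exact exp_neg_integrableOn_Ioi (-c) hb
  have hset : (fun x : ℝ => -x) ⁻¹' Iic c = Ici (-c) := by
    ext x; simp [neg_le]
  rw [hset]
  refine h0.congr_fun (fun x _ => ?_) measurableSet_Ici
  show Real.exp (-b * x) = Real.exp (b * -x)
  ring_nf

/-- Biorthogonality `⟨η_{x₀}, η^{y₀}⟩ = δ(x₀ - y₀)` in the second example, smeared against
a test function `ψ`: with `λ = (√2/2)(1+i)`, `c = i/(√2(1+i))`, `η_{x₀}(x) = c e^{-λ|x-x₀|}`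
and `η^{y₀} = ξ_{y₀} - i ξ''_{y₀}`, one has
`∫ conj(c) e^{-conj(λ)|x-x₀|} (ψ(x) - i ψ''(x)) dx = ψ(x₀)`. -/
theorem statement17 (l c : ℂ)
    (hl : l = (Real.sqrt 2 / 2 : ℝ) * (1 + Complex.I))
    (hc : c = Complex.I / ((Real.sqrt 2 : ℝ) * (1 + Complex.I))) :
    ∀ (ψ : SchwartzMap ℝ ℂ) (x₀ : ℝ),
      ∫ x : ℝ, (starRingEnd ℂ) c * Complex.exp (-(starRingEnd ℂ) l * ((|x - x₀| : ℝ) : ℂ))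
          * (ψ x - Complex.I * deriv (deriv (⇑ψ)) x) = ψ x₀ := by
  intro ψ x₀
  set s : ℝ := Real.sqrt 2 with hs
  have hs0 : 0 < s := Real.sqrt_pos.mpr (by norm_num)
  have hss : (s : ℂ) * s = 2 := by
    norm_cast
    rw [hs]
    exact Real.mul_self_sqrt (by norm_num)
  set a : ℝ := s / 2 with ha
  have ha0 : 0 < a := by positivity
  set μ : ℂ := (starRingEnd ℂ) l with hmu
  have hμ : μ = (a : ℂ) * (1 - Complex.I) := by
    rw [hmu, hl, map_mul, Complex.conj_ofReal, map_add, map_one, Complex.conj_I]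
    simp only [ha]
    push_cast
    ring
  have ha2 : (a : ℂ) * a = 1 / 2 := by
    rw [ha]; push_cast; field_simp; linear_combination hss
  have hI2 : Complex.I * Complex.I = -1 := Complex.I_mul_I
  have hμ2 : μ * μ = -Complex.I := by
    rw [hμ]
    linear_combination (-2*Complex.I) * ha2 + ((a:ℂ)*(a:ℂ)) * hI2
  -- derivatives of ψ as Schwartz maps
  set ψ' : SchwartzMap ℝ ℂ := SchwartzMap.derivCLM ℝ ℂ ψ with hψ'
  set ψ'' : SchwartzMap ℝ ℂ := SchwartzMap.derivCLM ℝ ℂ ψ' with hψ''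
  have hd1 : deriv (⇑ψ) = ⇑ψ' := by
    funext x; rw [hψ']; exact (SchwartzMap.derivCLM_apply ℝ ψ x).symm
  have hd2 : deriv (deriv (⇑ψ)) = ⇑ψ'' := by
    rw [hd1]; funext x; rw [hψ'']; exact (SchwartzMap.derivCLM_apply ℝ ψ' x).symm
  have hdψ : ∀ x : ℝ, HasDerivAt (⇑ψ) (ψ' x) x := by
    intro x
    have := (ψ.differentiable x).hasDerivAt
    rwa [show deriv (⇑ψ) x = ψ' x from congrFun hd1 x] at this
  have hdψ' : ∀ x : ℝ, HasDerivAt (⇑ψ') (ψ'' x) x := by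
    intro x
    have := (ψ'.differentiable x).hasDerivAt
    rwa [show deriv (⇑ψ') x = ψ'' x from by
      rw [hψ'']; exact (SchwartzMap.derivCLM_apply ℝ ψ' x).symm] at this
  -- the smooth part of the integrand
  set g : ℝ → ℂ := fun x => ψ x - Complex.I * ψ'' x with hg
  have hgcont : Continuous g := ψ.continuous.sub (continuous_const.mul ψ''.continuous)
  -- Schwartz bounds
  set χ₁ : SchwartzMap ℝ ℂ := ψ - Complex.I • ψ'' with hχ₁
  have hχ₁x : ∀ x : ℝ, χ₁ x = g x := by
    intro x; rw [hχ₁, hg]; simp [SchwartzMap.sub_apply, SchwartzMap.smul_apply, smul_eq_mul]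
  set C₁ : ℝ := SchwartzMap.seminorm ℝ 0 0 χ₁ with hC₁
  have hgbound : ∀ x : ℝ, ‖g x‖ ≤ C₁ := by
    intro x; rw [← hχ₁x x]; exact SchwartzMap.norm_le_seminorm ℝ χ₁ x
  set χ₂ : SchwartzMap ℝ ℂ := (Complex.I * μ) • ψ + Complex.I • ψ' with hχ₂
  set C₂ : ℝ := SchwartzMap.seminorm ℝ 0 0 χ₂ with hC₂
  have hχ₂bound : ∀ x : ℝ, ‖(-(Complex.I * μ)) * ψ x - Complex.I * ψ' x‖ ≤ C₂ := by
    intro x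
    have e : (-(Complex.I * μ)) * ψ x - Complex.I * ψ' x = -(χ₂ x) := by
      rw [hχ₂]
      simp only [SchwartzMap.add_apply, SchwartzMap.smul_apply, smul_eq_mul]
      ring
    rw [e, norm_neg]; exact SchwartzMap.norm_le_seminorm ℝ χ₂ x
  set χ₃ : SchwartzMap ℝ ℂ := (Complex.I * μ) • ψ - Complex.I • ψ' with hχ₃
  set C₃ : ℝ := SchwartzMap.seminorm ℝ 0 0 χ₃ with hC₃
  have hχ₃bound : ∀ x : ℝ, ‖(Complex.I * μ) * ψ x - Complex.I * ψ' x‖ ≤ C₃ := by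
    intro x
    have : (Complex.I * μ) * ψ x - Complex.I * ψ' x = χ₃ x := by
      rw [hχ₃]; simp [SchwartzMap.sub_apply, SchwartzMap.smul_apply, smul_eq_mul]
    rw [this]; exact SchwartzMap.norm_le_seminorm ℝ χ₃ x
  -- real part computation
  have hre : ∀ z : ℂ, (-μ * z).re = -a * z.re - a * z.im := by
    intro z
    rw [hμ]
    simp [Complex.mul_re, Complex.ofReal_re, Complex.ofReal_im]
    ring
  have hre' : ∀ r : ℝ, (-μ * (r : ℂ)).re = -a * r := by
    intro r; rw [hre]; simp
  have hnormexp : ∀ r : ℝ, ‖Complex.exp (-μ * (r : ℂ))‖ = Real.exp (-a * r) := by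
    intro r
    rw [Complex.norm_exp, hre']
  -- the antiderivatives
  set F : ℝ → ℂ := fun x =>
    Complex.exp (-μ * ((x : ℂ) - (x₀ : ℂ))) * ((-(Complex.I * μ)) * ψ x - Complex.I * ψ' x)
    with hF
  set G : ℝ → ℂ := fun x =>
    Complex.exp (-μ * ((x₀ : ℂ) - (x : ℂ))) * ((Complex.I * μ) * ψ x - Complex.I * ψ' x)
    with hG
  have hFderiv : ∀ x : ℝ, HasDerivAt F
      (Complex.exp (-μ * ((x : ℂ) - (x₀ : ℂ))) * g x) x := by
    intro x
    have h1 : HasDerivAt (fun y : ℝ => -μ * ((y : ℂ) - (x₀ : ℂ))) (-μ) x := by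
      simpa using ((Complex.ofRealCLM.hasDerivAt (x := x)).sub_const ((x₀ : ℂ))).const_mul (-μ)
    have hexp := h1.cexp
    have hin : HasDerivAt
        (fun y : ℝ => (-(Complex.I * μ)) * ψ y - Complex.I * ψ' y)
        ((-(Complex.I * μ)) * ψ' x - Complex.I * ψ'' x) x :=
      ((hdψ x).const_mul _).sub ((hdψ' x).const_mul _)
    have hmul := hexp.mul hin
    convert hmul using 1
    · rfl
    · rfl
    rw [hg]
    linear_combination (Complex.exp (-μ * ((x : ℂ) - (x₀ : ℂ))) * ψ x * (-Complex.I)) * hμ2 +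
      (Complex.exp (-μ * ((x : ℂ) - (x₀ : ℂ))) * ψ x) * hI2
  have hGderiv : ∀ x : ℝ, HasDerivAt G
      (Complex.exp (-μ * ((x₀ : ℂ) - (x : ℂ))) * g x) x := by
    intro x
    have h1 : HasDerivAt (fun y : ℝ => -μ * ((x₀ : ℂ) - (y : ℂ))) μ x := by
      have := ((Complex.ofRealCLM.hasDerivAt (x := x)).const_sub ((x₀ : ℂ))).const_mul (-μ)
      simpa using this
    have hexp := h1.cexp
    have hin : HasDerivAt
        (fun y : ℝ => (Complex.I * μ) * ψ y - Complex.I * ψ' y)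
        ((Complex.I * μ) * ψ' x - Complex.I * ψ'' x) x :=
      ((hdψ x).const_mul _).sub ((hdψ' x).const_mul _)
    have hmul := hexp.mul hin
    convert hmul using 1
    · rfl
    · rfl
    rw [hg]
    linear_combination (Complex.exp (-μ * ((x₀ : ℂ) - (x : ℂ))) * ψ x * (-Complex.I)) * hμ2 +
      (Complex.exp (-μ * ((x₀ : ℂ) - (x : ℂ))) * ψ x) * hI2
  -- limits
  have hFtop : Tendsto F atTop (𝓝 0) := by
    apply squeeze_zero_norm (a := fun x => Real.exp (-a * (x - x₀)) * C₂)
    · intro x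
      rw [hF]
      calc ‖Complex.exp (-μ * ((x : ℂ) - (x₀ : ℂ))) *
            ((-(Complex.I * μ)) * ψ x - Complex.I * ψ' x)‖
          = ‖Complex.exp (-μ * ((x : ℂ) - (x₀ : ℂ)))‖ *
            ‖(-(Complex.I * μ)) * ψ x - Complex.I * ψ' x‖ := norm_mul _ _
        _ ≤ Real.exp (-a * (x - x₀)) * C₂ := by
            have h1 : ‖Complex.exp (-μ * ((x : ℂ) - (x₀ : ℂ)))‖ = Real.exp (-a * (x - x₀)) := by
              rw [show ((x : ℂ) - (x₀ : ℂ)) = ((x - x₀ : ℝ) : ℂ) by push_cast; ring]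
              exact hnormexp _
            rw [h1]
            exact mul_le_mul_of_nonneg_left (hχ₂bound x) (Real.exp_nonneg _)
    · have h2 : Tendsto (fun x : ℝ => -a * (x - x₀)) atTop atBot := by
        have := (tendsto_atTop_add_const_right atTop (-x₀) tendsto_id)
        simpa [sub_eq_add_neg] using this.const_mul_atTop_of_neg (neg_neg_iff_pos.2 ha0)
      have h3 : Tendsto (fun x : ℝ => Real.exp (-a * (x - x₀))) atTop (𝓝 0) :=
        Real.tendsto_exp_atBot.comp h2
      simpa using h3.mul_const C₂
  have hGbot : Tendsto G atBot (𝓝 0) := by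
    apply squeeze_zero_norm (a := fun x => Real.exp (-a * (x₀ - x)) * C₃)
    · intro x
      rw [hG]
      calc ‖Complex.exp (-μ * ((x₀ : ℂ) - (x : ℂ))) *
            ((Complex.I * μ) * ψ x - Complex.I * ψ' x)‖
          = ‖Complex.exp (-μ * ((x₀ : ℂ) - (x : ℂ)))‖ *
            ‖(Complex.I * μ) * ψ x - Complex.I * ψ' x‖ := norm_mul _ _
        _ ≤ Real.exp (-a * (x₀ - x)) * C₃ := by
            have h1 : ‖Complex.exp (-μ * ((x₀ : ℂ) - (x : ℂ)))‖ = Real.exp (-a * (x₀ - x)) := by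
              rw [show ((x₀ : ℂ) - (x : ℂ)) = ((x₀ - x : ℝ) : ℂ) by push_cast; ring]
              exact hnormexp _
            rw [h1]
            exact mul_le_mul_of_nonneg_left (hχ₃bound x) (Real.exp_nonneg _)
    · have h2 : Tendsto (fun x : ℝ => -a * (x₀ - x)) atBot atBot := by
        have h2' : Tendsto (fun x : ℝ => x - x₀) atBot atBot :=
          tendsto_atBot_add_const_right atBot (-x₀) tendsto_id
        have := h2'.const_mul_atBot ha0
        apply this.congr
        intro x; ring
      have h3 : Tendsto (fun x : ℝ => Real.exp (-a * (x₀ - x))) atBot (𝓝 0) :=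
        Real.tendsto_exp_atBot.comp h2
      simpa using h3.mul_const C₃
  -- integrability on the half lines
  have hFint : IntegrableOn (fun x : ℝ => Complex.exp (-μ * ((x : ℂ) - (x₀ : ℂ))) * g x)
      (Ioi x₀) := by
    have hbound : IntegrableOn (fun x : ℝ => (C₁ * Real.exp (a * x₀)) * Real.exp (-a * x))
        (Ioi x₀) := (exp_neg_integrableOn_Ioi x₀ ha0).const_mul _
    refine Integrable.mono' hbound ?_ ?_
    · apply Continuous.aestronglyMeasurable
      have hc1 : Continuous fun x : ℝ => -μ * ((x : ℂ) - (x₀ : ℂ)) :=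
        continuous_const.mul (Complex.continuous_ofReal.sub continuous_const)
      exact (Complex.continuous_exp.comp hc1).mul hgcont
    · refine ae_of_all _ fun x => ?_
      rw [norm_mul]
      have h1 : ‖Complex.exp (-μ * ((x : ℂ) - (x₀ : ℂ)))‖ = Real.exp (-a * (x - x₀)) := by
        rw [show ((x : ℂ) - (x₀ : ℂ)) = ((x - x₀ : ℝ) : ℂ) by push_cast; ring]
        exact hnormexp _
      rw [h1]
      have h2 : Real.exp (-a * (x - x₀)) * ‖g x‖ ≤ Real.exp (-a * (x - x₀)) * C₁ :=
        mul_le_mul_of_nonneg_left (hgbound x) (Real.exp_nonneg _)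
      refine h2.trans_eq ?_
      rw [show -a * (x - x₀) = a * x₀ + (-a * x) by ring, Real.exp_add]
      ring
  have hGint : IntegrableOn (fun x : ℝ => Complex.exp (-μ * ((x₀ : ℂ) - (x : ℂ))) * g x)
      (Iic x₀) := by
    have hbound : IntegrableOn (fun x : ℝ => (C₁ * Real.exp (-a * x₀)) * Real.exp (a * x))
        (Iic x₀) := (exp_integrableOn_Iic_aux x₀ ha0).const_mul _
    refine Integrable.mono' hbound ?_ ?_
    · apply Continuous.aestronglyMeasurable
      have hc1 : Continuous fun x : ℝ => -μ * ((x₀ : ℂ) - (x : ℂ)) :=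
        continuous_const.mul (continuous_const.sub Complex.continuous_ofReal)
      exact (Complex.continuous_exp.comp hc1).mul hgcont
    · refine ae_of_all _ fun x => ?_
      rw [norm_mul]
      have h1 : ‖Complex.exp (-μ * ((x₀ : ℂ) - (x : ℂ)))‖ = Real.exp (-a * (x₀ - x)) := by
        rw [show ((x₀ : ℂ) - (x : ℂ)) = ((x₀ - x : ℝ) : ℂ) by push_cast; ring]
        exact hnormexp _
      rw [h1]
      have h2 : Real.exp (-a * (x₀ - x)) * ‖g x‖ ≤ Real.exp (-a * (x₀ - x)) * C₁ :=
        mul_le_mul_of_nonneg_left (hgbound x) (Real.exp_nonneg _)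
      refine h2.trans_eq ?_
      rw [show -a * (x₀ - x) = -a * x₀ + a * x by ring, Real.exp_add]
      ring
  -- FTC on the half lines
  have hIoi : ∫ x in Ioi x₀, Complex.exp (-μ * ((x : ℂ) - (x₀ : ℂ))) * g x = 0 - F x₀ :=
    integral_Ioi_of_hasDerivAt_of_tendsto' (fun x _ => hFderiv x) hFint hFtop
  have hIic : ∫ x in Iic x₀, Complex.exp (-μ * ((x₀ : ℂ) - (x : ℂ))) * g x = G x₀ - 0 :=
    integral_Iic_of_hasDerivAt_of_tendsto' (fun x _ => hGderiv x) hGint hGbot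
  -- the original integrand
  set h : ℝ → ℂ := fun x =>
    (starRingEnd ℂ) c * Complex.exp (-μ * ((|x - x₀| : ℝ) : ℂ)) *
      (ψ x - Complex.I * deriv (deriv (⇑ψ)) x) with hh
  have hhval : ∀ x : ℝ, h x =
      (starRingEnd ℂ) c * (Complex.exp (-μ * ((|x - x₀| : ℝ) : ℂ)) * g x) := by
    intro x
    simp only [hh, hg, hd2]
    ring
  have heq₁ : ∀ x ∈ Ioi x₀, h x =
      (starRingEnd ℂ) c * (Complex.exp (-μ * ((x : ℂ) - (x₀ : ℂ))) * g x) := by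
    intro x hx
    rw [hhval x]
    congr 3
    rw [abs_of_pos (by simpa [sub_pos] using hx)]
    push_cast; ring
  have heq₂ : ∀ x ∈ Iic x₀, h x =
      (starRingEnd ℂ) c * (Complex.exp (-μ * ((x₀ : ℂ) - (x : ℂ))) * g x) := by
    intro x hx
    rw [hhval x]
    congr 3
    rw [abs_of_nonpos (by simpa [sub_nonpos] using hx)]
    push_cast; ring
  have hint₁ : IntegrableOn h (Ioi x₀) :=
    MeasureTheory.IntegrableOn.congr_fun (hFint.const_mul ((starRingEnd ℂ) c))
      (fun x hx => (heq₁ x hx).symm) measurableSet_Ioi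
  have hint₂ : IntegrableOn h (Iic x₀) :=
    MeasureTheory.IntegrableOn.congr_fun (hGint.const_mul ((starRingEnd ℂ) c))
      (fun x hx => (heq₂ x hx).symm) measurableSet_Iic
  have hsplit : (∫ x in Iic x₀, h x) + (∫ x in Ioi x₀, h x) = ∫ x : ℝ, h x :=
    intervalIntegral.integral_Iic_add_Ioi hint₂ hint₁
  have hval₁ : ∫ x in Ioi x₀, h x = (starRingEnd ℂ) c * (0 - F x₀) := by
    rw [setIntegral_congr_fun measurableSet_Ioi heq₁, integral_const_mul, hIoi]
  have hval₂ : ∫ x in Iic x₀, h x = (starRingEnd ℂ) c * (G x₀ - 0) := by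
    rw [setIntegral_congr_fun measurableSet_Iic heq₂, integral_const_mul, hIic]
  -- evaluate F x₀ and G x₀
  have hFx₀ : F x₀ = (-(Complex.I * μ)) * ψ x₀ - Complex.I * ψ' x₀ := by
    rw [hF]; simp
  have hGx₀ : G x₀ = (Complex.I * μ) * ψ x₀ - Complex.I * ψ' x₀ := by
    rw [hG]; simp
  -- the algebraic identity
  have hkey : (starRingEnd ℂ) c * (2 * Complex.I * μ) = 1 := by
    have hcc : (starRingEnd ℂ) c = (-Complex.I) / ((s : ℂ) * (1 - Complex.I)) := by
      rw [hc]
      simp [map_div₀, map_mul, Complex.conj_ofReal, Complex.conj_I]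
      ring_nf
    have hden : (s : ℂ) * (1 - Complex.I) ≠ 0 := by
      apply mul_ne_zero
      · exact_mod_cast hs0.ne'
      · intro hcon
        have : (1 - Complex.I).re = 0 := by rw [hcon]; simp
        simp at this
    rw [hcc, hμ, ha]
    push_cast
    rw [div_mul_eq_mul_div, div_eq_one_iff_eq hden]
    linear_combination (-(s : ℂ) * (1 - Complex.I)) * hI2
  -- finish
  have hfinal : ∫ x : ℝ, h x = ψ x₀ := by
    rw [← hsplit, hval₁, hval₂, hFx₀, hGx₀]
    linear_combination ψ x₀ * hkey
  exact hfinal
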